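/- Let A ∈ ℝ^{n×n} be Hurwitz, B ∈ ℝ^{n×1}, C ∈ ℝ^{p×n}, and assume Bᵀ e^{Aᵀt} Cᵀ C e^{As} B ≥ 0 for all t, s ≥ 0. Then the minimum IOS-gain and the minimum output asymptotic gain of ẋ = Ax + Bu, y = Cx satisfy γ = γ_as = sup_{T>0} |∫₀^T C e^{As} B ds| = |C A^{−1} B|. -/

import Mathlib

open Filter MeasureTheory NormedSpace

noncomputable section

set_option maxHeartbeats 1000000

open Matrix Topology Polynomial

/-- Euclidean norm of a vector in `ℝ^k`. -/
def eNorm {k : ℕ} (v : Fin k → ℝ) : ℝ := Real.sqrt (∑ i, v i ^ 2)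

/-- Matrix norm induced by the Euclidean norms. -/
def matNorm {k l : ℕ} (M : Matrix (Fin k) (Fin l) ℝ) : ℝ :=
  sSup {r | ∃ x : Fin l → ℝ, eNorm x = 1 ∧ r = eNorm (M.mulVec x)}

/-- `A` is Hurwitz: every (complex) eigenvalue of `A` has negative real part. -/
def Hurwitz {n : ℕ} (A : Matrix (Fin n) (Fin n) ℝ) : Prop :=
  ∀ μ ∈ spectrum ℂ (A.map (Complex.ofReal)), μ.re < 0

/-- The matrix exponential `e^{tA}`. -/
def mexp {n : ℕ} (A : Matrix (Fin n) (Fin n) ℝ) (t : ℝ) : Matrix (Fin n) (Fin n) ℝ :=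
  exp (t • A)



lemma dot_self_nonneg {k : ℕ} (v : Fin k → ℝ) : 0 ≤ v ⬝ᵥ v :=
  Finset.sum_nonneg fun i _ => mul_self_nonneg _

lemma eNorm_eq {k : ℕ} (v : Fin k → ℝ) : eNorm v = Real.sqrt (v ⬝ᵥ v) := by
  simp [eNorm, dotProduct, sq]

lemma eNorm_nonneg {k : ℕ} (v : Fin k → ℝ) : 0 ≤ eNorm v := Real.sqrt_nonneg _

lemma eNorm_le {k : ℕ} {v w : Fin k → ℝ} (h : v ⬝ᵥ v ≤ w ⬝ᵥ w) : eNorm v ≤ eNorm w := by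
  rw [eNorm_eq, eNorm_eq]; exact Real.sqrt_le_sqrt h

lemma eNorm_neg {k : ℕ} (v : Fin k → ℝ) : eNorm (-v) = eNorm v := by
  simp [eNorm]

lemma continuous_eNorm {k : ℕ} : Continuous (eNorm (k := k)) := by
  unfold eNorm
  exact Real.continuous_sqrt.comp (by continuity)

def dotCLM {k : ℕ} (w : Fin k → ℝ) : (Fin k → ℝ) →L[ℝ] ℝ :=
  LinearMap.toContinuousLinearMap
    { toFun := fun v => w ⬝ᵥ v
      map_add' := fun x y => dotProduct_add w x y
      map_smul' := fun c x => by simp [dotProduct_smul] }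

@[simp] lemma dotCLM_apply {k : ℕ} (w v : Fin k → ℝ) : dotCLM w v = w ⬝ᵥ v := rfl

lemma dot_integral {k : ℕ} (w : Fin k → ℝ) (f : ℝ → Fin k → ℝ) (μ : Measure ℝ)
    (hf : Integrable f μ) :
    w ⬝ᵥ (∫ s, f s ∂μ) = ∫ s, w ⬝ᵥ f s ∂μ := by
  simpa using (ContinuousLinearMap.integral_comp_comm (dotCLM w) hf).symm

lemma dot_intervalIntegral {k : ℕ} (w : Fin k → ℝ) (f : ℝ → Fin k → ℝ) {a b : ℝ}
    (hf : IntervalIntegrable f volume a b) :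
    w ⬝ᵥ (∫ s in a..b, f s) = ∫ s in a..b, w ⬝ᵥ f s := by
  simpa using (ContinuousLinearMap.intervalIntegral_comp_comm (dotCLM w) hf).symm

section Core
variable {p : ℕ} (g : ℝ → Fin p → ℝ)

lemma F_mono (hg : Continuous g) (hsign : ∀ t ≥ (0:ℝ), ∀ s ≥ (0:ℝ), 0 ≤ g t ⬝ᵥ g s)
    {T₁ T₂ : ℝ} (h0 : 0 ≤ T₁) (h12 : T₁ ≤ T₂) :
    (∫ s in (0:ℝ)..T₁, g s) ⬝ᵥ (∫ s in (0:ℝ)..T₁, g s)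
      ≤ (∫ s in (0:ℝ)..T₂, g s) ⬝ᵥ (∫ s in (0:ℝ)..T₂, g s) := by
  set F₁ := ∫ s in (0:ℝ)..T₁, g s with hF₁
  set D := ∫ s in T₁..T₂, g s with hD
  have hsplit : (∫ s in (0:ℝ)..T₂, g s) = F₁ + D :=
    (intervalIntegral.integral_add_adjacent_intervals
      (hg.intervalIntegrable _ _) (hg.intervalIntegrable _ _)).symm
  have hFD : 0 ≤ F₁ ⬝ᵥ D := by
    rw [dot_intervalIntegral F₁ g (hg.intervalIntegrable _ _)]
    refine intervalIntegral.integral_nonneg h12 fun s hs => ?_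
    have hs0 : 0 ≤ s := le_trans h0 hs.1
    rw [dotProduct_comm, dot_intervalIntegral (g s) g (hg.intervalIntegrable _ _)]
    refine intervalIntegral.integral_nonneg h0 fun τ hτ => ?_
    exact hsign s hs0 τ hτ.1
  have hDD : 0 ≤ D ⬝ᵥ D := dot_self_nonneg D
  have hDF : F₁ ⬝ᵥ D = D ⬝ᵥ F₁ := dotProduct_comm _ _
  rw [hsplit, add_dotProduct, dotProduct_add, dotProduct_add]
  linarith

lemma key_bound (hg : Continuous g) (hsign : ∀ t ≥ (0:ℝ), ∀ s ≥ (0:ℝ), 0 ≤ g t ⬝ᵥ g s)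
    (u : ℝ → ℝ) (hum : Measurable u)
    (hub : ∀ᵐ s ∂(volume.restrict (Set.Ici (0:ℝ))), |u s| ≤ 1)
    {t : ℝ} (ht : 0 ≤ t) :
    (∫ s in (0:ℝ)..t, u s • g (t - s)) ⬝ᵥ (∫ s in (0:ℝ)..t, u s • g (t - s))
      ≤ (∫ s in (0:ℝ)..t, g s) ⬝ᵥ (∫ s in (0:ℝ)..t, g s) := by
  set ν := volume.restrict (Set.Ioc (0:ℝ) t) with hν
  have hub' : ∀ᵐ s ∂ν, |u s| ≤ 1 :=
    ae_restrict_of_ae_restrict_of_subset (fun x hx => le_of_lt hx.1) hub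
  have hmem : ∀ᵐ σ ∂ν, σ ∈ Set.Ioc (0:ℝ) t := ae_restrict_mem measurableSet_Ioc
  have hgc : Continuous fun σ : ℝ => g (t - σ) := hg.comp (continuous_const.sub continuous_id)
  have hgt_int : Integrable (fun σ => g (t - σ)) ν := by
    rw [hν, ← IntegrableOn]
    exact hgc.integrableOn_Ioc
  have hh_meas : AEStronglyMeasurable (fun σ => u σ • g (t - σ)) ν :=
    (hum.aestronglyMeasurable).smul hgc.aestronglyMeasurable
  have hh_int : Integrable (fun σ => u σ • g (t - σ)) ν := by
    refine hgt_int.norm.mono' hh_meas ?_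
    filter_upwards [hub'] with σ hσ
    rw [norm_smul]
    calc ‖u σ‖ * ‖g (t - σ)‖ ≤ 1 * ‖g (t - σ)‖ := by
          exact mul_le_mul_of_nonneg_right hσ (norm_nonneg _)
    _ = ‖g (t - σ)‖ := one_mul _
  set y := ∫ σ, u σ • g (t - σ) ∂ν with hy
  set w := ∫ σ, g (t - σ) ∂ν with hw
  -- inner bound
  have hker : ∀ σ ∈ Set.Ioc (0:ℝ) t, ∀ τ ∈ Set.Ioc (0:ℝ) t, 0 ≤ g (t - σ) ⬝ᵥ g (t - τ) :=
    fun σ hσ τ hτ => hsign _ (by linarith [hσ.2]) _ (by linarith [hτ.2])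
  have hgw_nonneg : ∀ σ ∈ Set.Ioc (0:ℝ) t, 0 ≤ g (t - σ) ⬝ᵥ w := by
    intro σ hσ
    rw [hw, dot_integral _ _ _ hgt_int]
    refine integral_nonneg_of_ae ?_
    filter_upwards [hmem] with τ hτ
    exact hker σ hσ τ hτ
  have hinner : ∀ σ ∈ Set.Ioc (0:ℝ) t, |g (t - σ) ⬝ᵥ y| ≤ g (t - σ) ⬝ᵥ w := by
    intro σ hσ
    rw [hy, dot_integral _ _ _ hh_int]
    rw [← Real.norm_eq_abs]
    refine le_trans (norm_integral_le_integral_norm _) ?_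
    have h1 : Integrable (fun τ => ‖g (t - σ) ⬝ᵥ (u τ • g (t - τ))‖) ν :=
      ((dotCLM (g (t - σ))).integrable_comp hh_int).abs
    have h2 : Integrable (fun τ => g (t - σ) ⬝ᵥ g (t - τ)) ν :=
      (dotCLM (g (t - σ))).integrable_comp hgt_int
    rw [hw, dot_integral _ _ _ hgt_int]
    refine integral_mono_ae h1 h2 ?_
    filter_upwards [hub', hmem] with τ hτu hτm
    rw [Real.norm_eq_abs, dotProduct_smul, smul_eq_mul, abs_mul]
    calc |u τ| * |g (t - σ) ⬝ᵥ g (t - τ)| ≤ 1 * |g (t - σ) ⬝ᵥ g (t - τ)| :=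
          mul_le_mul_of_nonneg_right hτu (abs_nonneg _)
    _ = g (t - σ) ⬝ᵥ g (t - τ) := by rw [one_mul, abs_of_nonneg (hker σ hσ τ hτm)]
  -- outer bound
  have houter : y ⬝ᵥ y ≤ w ⬝ᵥ w := by
    have hyint : Integrable (fun σ => y ⬝ᵥ (u σ • g (t - σ))) ν :=
      (dotCLM y).integrable_comp hh_int
    have hwint : Integrable (fun σ => g (t - σ) ⬝ᵥ w) ν := by
      have := (dotCLM w).integrable_comp hgt_int
      simpa [dotProduct_comm] using this
    calc y ⬝ᵥ y = ∫ σ, y ⬝ᵥ (u σ • g (t - σ)) ∂ν := by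
          rw [hy, dot_integral _ _ _ hh_int]
    _ ≤ ∫ σ, g (t - σ) ⬝ᵥ w ∂ν := by
          refine integral_mono_ae hyint hwint ?_
          filter_upwards [hub', hmem] with σ hσu hσm
          rw [dotProduct_smul, smul_eq_mul, dotProduct_comm]
          calc u σ * (g (t - σ) ⬝ᵥ y) ≤ |u σ * (g (t - σ) ⬝ᵥ y)| := le_abs_self _
          _ = |u σ| * |g (t - σ) ⬝ᵥ y| := abs_mul _ _
          _ ≤ 1 * (g (t - σ) ⬝ᵥ w) :=
              mul_le_mul hσu (hinner σ hσm) (abs_nonneg _) zero_le_one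
          _ = g (t - σ) ⬝ᵥ w := one_mul _
    _ = w ⬝ᵥ w := by
          rw [hw, dot_integral w _ _ hgt_int]
          congr 1
          exact funext fun σ => dotProduct_comm _ _
  -- identify with interval integrals
  have hyi : (∫ s in (0:ℝ)..t, u s • g (t - s)) = y := by
    rw [intervalIntegral.integral_of_le ht, hy]
  have hwi : (∫ s in (0:ℝ)..t, g s) = w := by
    have h1 : (∫ s in (0:ℝ)..t, g (t - s)) = ∫ s in (0:ℝ)..t, g s := by
      simpa using intervalIntegral.integral_comp_sub_left g t (a := 0) (b := t)
    rw [← h1, intervalIntegral.integral_of_le ht, hw]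
  rw [hyi, hwi]
  exact houter

end Core



lemma pow_mulVec_eigen {n : ℕ} (A' : Matrix (Fin n) (Fin n) ℂ) (μ : ℂ) (v : Fin n → ℂ)
    (hv : A'.mulVec v = μ • v) (k : ℕ) : (A' ^ k).mulVec v = μ ^ k • v := by
  induction k with
  | zero => simp [Matrix.one_mulVec]
  | succ k ih =>
      rw [pow_succ', ← Matrix.mulVec_mulVec, ih, Matrix.mulVec_smul, hv, smul_smul, ← pow_succ]

lemma aeval_mulVec_eigen {n : ℕ} (A' : Matrix (Fin n) (Fin n) ℂ) (μ : ℂ) (v : Fin n → ℂ)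
    (hv : A'.mulVec v = μ • v) (q : ℂ[X]) :
    ((aeval A') q).mulVec v = (eval μ q) • v := by
  rw [aeval_eq_sum_range, eval_eq_sum_range]
  induction (q.natDegree + 1) with
  | zero => simp [Matrix.zero_mulVec]
  | succ N ih =>
      rw [Finset.sum_range_succ, Finset.sum_range_succ, Matrix.add_mulVec, ih,
        Matrix.smul_mulVec, pow_mulVec_eigen A' μ v hv, add_smul, smul_smul]

lemma exp_mulVec_eigen {n : ℕ} (A' : Matrix (Fin n) (Fin n) ℂ) (μ : ℂ) (v : Fin n → ℂ)
    (hv : A'.mulVec v = μ • v) :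
    (exp A').mulVec v = Complex.exp μ • v := by
  letI : NormedRing (Matrix (Fin n) (Fin n) ℂ) := Matrix.linftyOpNormedRing
  letI : NormedAlgebra ℂ (Matrix (Fin n) (Fin n) ℂ) := Matrix.linftyOpNormedAlgebra
  letI : NormedAlgebra ℝ (Matrix (Fin n) (Fin n) ℂ) := Matrix.linftyOpNormedAlgebra
  letI : CompleteSpace (Matrix (Fin n) (Fin n) ℂ) := FiniteDimensional.complete ℂ _
  let L : Matrix (Fin n) (Fin n) ℂ →L[ℂ] (Fin n → ℂ) :=
    LinearMap.toContinuousLinearMap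
      { toFun := fun M => M.mulVec v
        map_add' := fun M N => Matrix.add_mulVec M N v
        map_smul' := fun c M => Matrix.smul_mulVec c M v }
  have hL : ∀ M : Matrix (Fin n) (Fin n) ℂ, L M = M.mulVec v := fun _ => rfl
  rw [show (exp A').mulVec v = L (exp A') from rfl, exp_eq_tsum ℂ,
    L.map_tsum (expSeries_summable' (𝕂 := ℂ) A')]
  have : ∀ k : ℕ, L (((k.factorial : ℂ))⁻¹ • A' ^ k) = ((k.factorial : ℂ))⁻¹ • μ ^ k • v := by
    intro k
    rw [_root_.map_smul, hL, pow_mulVec_eigen A' μ v hv]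
  rw [tsum_congr this]
  have hsummable : Summable fun k : ℕ => ((k.factorial : ℂ))⁻¹ * μ ^ k := by
    simpa [smul_eq_mul] using expSeries_summable' (𝕂 := ℂ) (𝔸 := ℂ) μ
  simp_rw [smul_smul]
  rw [Summable.tsum_smul_const hsummable]
  congr 1
  rw [Complex.exp_eq_exp_ℂ, exp_eq_tsum ℂ]
  simp [smul_eq_mul]


lemma exp_mem_adjoin {𝔸 : Type*} [NormedRing 𝔸] [NormedAlgebra ℝ 𝔸] [NormedAlgebra ℂ 𝔸]
    [CompleteSpace 𝔸] [FiniteDimensional ℂ 𝔸] (x : 𝔸) :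
    exp x ∈ Algebra.adjoin ℂ {x} := by
  have hclosed : IsClosed ((Subalgebra.toSubmodule (Algebra.adjoin ℂ {x})) : Set 𝔸) :=
    Submodule.closed_of_finiteDimensional _
  have hsum := (expSeries_hasSum_exp (𝕂 := ℂ) x).tendsto_sum_nat
  have hmem : exp x ∈ Subalgebra.toSubmodule (Algebra.adjoin ℂ {x}) := by
    refine hclosed.mem_of_tendsto hsum (Filter.Eventually.of_forall fun N => ?_)
    refine Submodule.sum_mem _ fun k _ => ?_
    rw [expSeries_apply_eq]
    refine Submodule.smul_mem _ _ ?_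
    rw [Subalgebra.mem_toSubmodule]
    exact pow_mem (Algebra.subset_adjoin (Set.mem_singleton x)) _
  rwa [Subalgebra.mem_toSubmodule] at hmem

lemma spec_exp_lt_one {n : ℕ} [NeZero n] (A : Matrix (Fin n) (Fin n) ℝ) (hA : Hurwitz A) :
    ∀ lam ∈ spectrum ℂ (exp (A.map Complex.ofReal)), ‖lam‖₊ < 1 := by
  set A' := A.map (Complex.ofReal) with hA'
  have hadj : exp A' ∈ Algebra.adjoin ℂ {A'} := by
    letI : NormedRing (Matrix (Fin n) (Fin n) ℂ) := Matrix.linftyOpNormedRing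
    letI : NormedAlgebra ℂ (Matrix (Fin n) (Fin n) ℂ) := Matrix.linftyOpNormedAlgebra
    letI : NormedAlgebra ℝ (Matrix (Fin n) (Fin n) ℂ) := Matrix.linftyOpNormedAlgebra
    letI : CompleteSpace (Matrix (Fin n) (Fin n) ℂ) := FiniteDimensional.complete ℂ _
    exact exp_mem_adjoin A'
  rw [Algebra.adjoin_singleton_eq_range_aeval, AlgHom.mem_range] at hadj
  obtain ⟨q, hq⟩ := hadj
  have hnon : (spectrum ℂ A').Nonempty :=
    spectrum.nonempty_of_isAlgClosed_of_finiteDimensional ℂ A'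
  intro lam hlam
  rw [← hq, spectrum.map_polynomial_aeval_of_nonempty A' q hnon] at hlam
  obtain ⟨μ, hμ, rfl⟩ := hlam
  have hμ2 : Module.End.HasEigenvalue (Matrix.toLinAlgEquiv' A' : Module.End ℂ (Fin n → ℂ)) μ := by
    rw [Module.End.hasEigenvalue_iff_mem_spectrum, AlgEquiv.spectrum_eq]
    exact hμ
  obtain ⟨v, hv⟩ := hμ2.exists_hasEigenvector
  have hv0 : v ≠ 0 := hv.2
  have hvev : A'.mulVec v = μ • v := by
    have h := hv.apply_eq_smul
    rw [show ((Matrix.toLinAlgEquiv' A') : (Fin n → ℂ) →ₗ[ℂ] (Fin n → ℂ)) = Matrix.toLin' A' from rfl,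
      Matrix.toLin'_apply] at h
    exact h
  have h1 : ((aeval A') q).mulVec v = (Polynomial.eval μ q) • v :=
    aeval_mulVec_eigen A' μ v hvev q
  have h2 : ((aeval A') q).mulVec v = Complex.exp μ • v := by
    rw [hq]; exact exp_mulVec_eigen A' μ v hvev
  have heq : Polynomial.eval μ q = Complex.exp μ := by
    obtain ⟨i, hi⟩ : ∃ i, v i ≠ 0 := by
      by_contra hcon
      push_neg at hcon
      exact hv0 (funext fun i => hcon i)
    have := congrFun (h1.symm.trans h2) i
    simpa [Pi.smul_apply, smul_eq_mul] using mul_right_cancel₀ hi this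
  show ‖eval μ q‖₊ < 1
  rw [heq, ← NNReal.coe_lt_coe]
  simp only [coe_nnnorm, Complex.norm_exp, NNReal.coe_one]
  exact Real.exp_lt_one_iff.mpr (hA μ hμ)

lemma mexp_tendsto_zero {n : ℕ} (A : Matrix (Fin n) (Fin n) ℝ) (hA : Hurwitz A) :
    Tendsto (fun t : ℝ => exp (t • A)) atTop (𝓝 0) := by
  rcases Nat.eq_zero_or_pos n with hn | hn
  · subst hn
    have hz : (fun t : ℝ => exp (t • A)) = fun _ => 0 := by
      funext t
      ext i j
      exact Fin.elim0 i
    rw [hz]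
    exact tendsto_const_nhds
  haveI : NeZero n := ⟨hn.ne'⟩
  letI : NormedRing (Matrix (Fin n) (Fin n) ℂ) := Matrix.linftyOpNormedRing
  letI : NormedAlgebra ℂ (Matrix (Fin n) (Fin n) ℂ) := Matrix.linftyOpNormedAlgebra
  letI : NormedAlgebra ℝ (Matrix (Fin n) (Fin n) ℂ) := Matrix.linftyOpNormedAlgebra
  letI : CompleteSpace (Matrix (Fin n) (Fin n) ℂ) := FiniteDimensional.complete ℂ _
  letI : NormedAlgebra ℚ (Matrix (Fin n) (Fin n) ℂ) := NormedAlgebra.restrictScalars ℚ ℂ _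
  letI : NormedRing (Matrix (Fin n) (Fin n) ℝ) := Matrix.linftyOpNormedRing
  letI : NormedAlgebra ℝ (Matrix (Fin n) (Fin n) ℝ) := Matrix.linftyOpNormedAlgebra
  letI : CompleteSpace (Matrix (Fin n) (Fin n) ℝ) := FiniteDimensional.complete ℝ _
  letI : NormedAlgebra ℚ (Matrix (Fin n) (Fin n) ℝ) := NormedAlgebra.restrictScalars ℚ ℝ _
  set A' := A.map (Complex.ofReal) with hA'd
  set M := exp A' with hM
  -- spectral radius < 1
  have hspec := spec_exp_lt_one A hA
  have hfin : (spectrum ℂ M).Finite := Matrix.finite_spectrum M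
  set r0 : NNReal := hfin.toFinset.sup (fun lam => ‖lam‖₊) with hr0
  have hr0lt : r0 < 1 := by
    rcases (spectrum.nonempty_of_isAlgClosed_of_finiteDimensional ℂ M) with ⟨lam0, hlam0⟩
    refine Finset.sup_lt_iff ?_ |>.mpr ?_
    · exact zero_lt_one
    · intro lam hlam
      exact hspec lam (hfin.mem_toFinset.mp hlam)
  have hρ : spectralRadius ℂ M < 1 := by
    rw [spectralRadius]
    refine lt_of_le_of_lt (iSup₂_le fun lam hlam => ?_) (ENNReal.coe_lt_coe.mpr hr0lt)
    exact ENNReal.coe_le_coe.mpr (Finset.le_sup (hfin.mem_toFinset.mpr hlam))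
  -- Gelfand
  have hgel := spectrum.pow_nnnorm_pow_one_div_tendsto_nhds_spectralRadius M
  obtain ⟨c, hc1, hc2⟩ := exists_between hρ
  have hcne : c ≠ ⊤ := (hc2.trans_le le_top).ne
  set r : NNReal := c.toNNReal with hr
  have hrc : (r : ENNReal) = c := ENNReal.coe_toNNReal hcne
  have hr1 : r < 1 := by
    rw [← ENNReal.coe_lt_one_iff, hrc]; exact hc2
  have hev : ∀ᶠ k : ℕ in atTop, (‖M ^ k‖₊ : ENNReal) ^ (1 / (k : ℝ)) < c :=
    hgel.eventually_lt_const hc1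
  have hevk : ∀ᶠ k : ℕ in atTop, ‖M ^ k‖ ≤ (r : ℝ) ^ k := by
    filter_upwards [hev, eventually_ge_atTop 1] with k hk hk1
    have hkne : (k : ℝ) ≠ 0 := by positivity
    have hx : ((‖M ^ k‖₊ : ENNReal) ^ (1 / (k : ℝ))) ^ (k : ℝ) = (‖M ^ k‖₊ : ENNReal) := by
      rw [← ENNReal.rpow_mul, one_div, inv_mul_cancel₀ hkne, ENNReal.rpow_one]
    have hle : (‖M ^ k‖₊ : ENNReal) ≤ c ^ (k : ℝ) := by
      rw [← hx]
      exact ENNReal.rpow_le_rpow hk.le (by positivity)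
    rw [← hrc, ← ENNReal.coe_rpow_of_nonneg _ (by positivity), ENNReal.coe_le_coe] at hle
    have h2 : (‖M ^ k‖₊ : ℝ) ≤ ((r ^ (k : ℝ) : NNReal) : ℝ) := NNReal.coe_le_coe.mpr hle
    rw [NNReal.coe_rpow, Real.rpow_natCast] at h2
    exact h2
  have hpow0 : Tendsto (fun k : ℕ => ‖M ^ k‖) atTop (𝓝 0) := by
    refine squeeze_zero' (Filter.Eventually.of_forall fun k => norm_nonneg _) hevk ?_
    exact tendsto_pow_atTop_nhds_zero_of_lt_one (by positivity) hr1
  -- continuity of s ↦ exp(sA')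
  have hcont : Continuous fun s : ℝ => exp (s • A') :=
    exp_continuous.comp (continuous_id.smul continuous_const)
  obtain ⟨K, hK⟩ := (isCompact_Icc (a := (0:ℝ)) (b := 1)).exists_bound_of_continuousOn
    hcont.continuousOn
  -- bound for t ≥ 0
  have hbound : ∀ t : ℝ, 0 ≤ t → ‖exp (t • A')‖ ≤ ‖M ^ ⌊t⌋₊‖ * K := by
    intro t ht
    have hsplit : t • A' = (⌊t⌋₊ : ℝ) • A' + (t - ⌊t⌋₊) • A' := by
      rw [← add_smul]; ring_nf
    have hcomm : Commute ((⌊t⌋₊ : ℝ) • A') ((t - ⌊t⌋₊) • A') :=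
      ((Commute.refl A').smul_left _).smul_right _
    have hsmul : exp (t • A') = M ^ ⌊t⌋₊ * exp ((t - ⌊t⌋₊) • A') := by
      rw [hsplit, Matrix.exp_add_of_commute _ _ hcomm, Nat.cast_smul_eq_nsmul, Matrix.exp_nsmul]
    rw [hsmul]
    refine le_trans (norm_mul_le _ _) ?_
    refine mul_le_mul_of_nonneg_left ?_ (norm_nonneg _)
    refine hK _ ⟨by simp [Nat.floor_le ht], ?_⟩
    have := Nat.lt_floor_add_one t
    linarith
  have hg0 : Tendsto (fun t : ℝ => ‖M ^ ⌊t⌋₊‖ * K) atTop (𝓝 0) := by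
    have := (hpow0.comp (tendsto_nat_floor_atTop (α := ℝ))).mul_const K
    simpa using this
  have hnorm0 : Tendsto (fun t : ℝ => ‖exp (t • A')‖) atTop (𝓝 0) := by
    refine squeeze_zero' (Filter.Eventually.of_forall fun t => norm_nonneg _) ?_ hg0
    filter_upwards [eventually_ge_atTop (0:ℝ)] with t ht
    exact hbound t ht
  have hC : Tendsto (fun t : ℝ => exp (t • A')) atTop (𝓝 0) :=
    tendsto_zero_iff_norm_tendsto_zero.mpr hnorm0
  -- transfer to ℝ
  have hφ : ∀ t : ℝ, (exp (t • A)).map Complex.ofReal = exp (t • A') := by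
    intro t
    have hφc : Continuous (Complex.ofRealAm.mapMatrix (m := Fin n)) :=
      continuous_id.matrix_map Complex.continuous_ofReal
    have := map_exp (Complex.ofRealAm.mapMatrix (m := Fin n)) hφc (t • A)
    simp [AlgHom.mapMatrix_apply, Complex.ofRealAm_coe, Matrix.map_smul] at this
    exact this
  refine tendsto_pi_nhds.mpr ?_
  intro i
  rw [tendsto_pi_nhds]
  intro j
  have hentry : Tendsto (fun t : ℝ => (exp (t • A')) i j) atTop (𝓝 0) := by
    have hc : Continuous fun X : Matrix (Fin n) (Fin n) ℂ => X i j :=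
      continuous_id.matrix_elem i j
    have := (hc.tendsto 0).comp hC
    simpa [Function.comp_def] using this
  have hre : (fun t : ℝ => (exp (t • A)) i j)
      = fun t : ℝ => ((exp (t • A')) i j).re := by
    funext t
    rw [← hφ t]
    simp [Matrix.map_apply]
  rw [hre]
  have := (Complex.continuous_re.tendsto 0).comp hentry
  simpa [Function.comp_def] using this



lemma hurwitz_isUnit_det {n : ℕ} (A : Matrix (Fin n) (Fin n) ℝ) (hA : Hurwitz A) :
    IsUnit A.det := by
  rw [isUnit_iff_ne_zero]
  intro hdet
  have hdet' : (A.map Complex.ofReal).det = 0 := by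
    have h1 : (A.map Complex.ofReal).det = (Complex.ofRealHom.mapMatrix A).det := rfl
    rw [h1, ← RingHom.map_det, hdet, map_zero]
  have h0 : (0 : ℂ) ∈ spectrum ℂ (A.map Complex.ofReal) := by
    rw [spectrum.zero_mem_iff]
    intro hunit
    rw [Matrix.isUnit_iff_isUnit_det, hdet'] at hunit
    exact (not_isUnit_zero hunit : False)
  have := hA 0 h0
  simp at this

lemma F_tendsto {n p : ℕ} (A : Matrix (Fin n) (Fin n) ℝ) (B : Fin n → ℝ)
    (C : Matrix (Fin p) (Fin n) ℝ) (hA : Hurwitz A)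
    (hmexp : Tendsto (fun t : ℝ => exp (t • A)) atTop (𝓝 0)) :
    Tendsto (fun T : ℝ => ∫ s in (0:ℝ)..T, C.mulVec ((exp (s • A)).mulVec B)) atTop
      (𝓝 (-(C.mulVec (A⁻¹.mulVec B)))) := by
  letI : NormedRing (Matrix (Fin n) (Fin n) ℝ) := Matrix.linftyOpNormedRing
  letI : NormedAlgebra ℝ (Matrix (Fin n) (Fin n) ℝ) := Matrix.linftyOpNormedAlgebra
  letI : CompleteSpace (Matrix (Fin n) (Fin n) ℝ) := FiniteDimensional.complete ℝ _
  letI : NormedAlgebra ℚ (Matrix (Fin n) (Fin n) ℝ) := NormedAlgebra.restrictScalars ℚ ℝ _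
  have hdet := hurwitz_isUnit_det A hA
  have hcontm : Continuous fun s : ℝ => exp (s • A) :=
    exp_continuous.comp (continuous_id.smul continuous_const)
  have hg : Continuous fun s : ℝ => C.mulVec ((exp (s • A)).mulVec B) :=
    continuous_const.matrix_mulVec (hcontm.matrix_mulVec continuous_const)
  set ΨL : Matrix (Fin n) (Fin n) ℝ →L[ℝ] (Fin p → ℝ) :=
    LinearMap.toContinuousLinearMap
      { toFun := fun M => C.mulVec ((A⁻¹ * M).mulVec B)
        map_add' := fun M N => by
          rw [mul_add, Matrix.add_mulVec, Matrix.mulVec_add]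
        map_smul' := fun c M => by
          rw [mul_smul_comm, Matrix.smul_mulVec, Matrix.mulVec_smul, RingHom.id_apply] } with hΨL
  have hΨapp : ∀ M, ΨL M = C.mulVec ((A⁻¹ * M).mulVec B) := fun _ => rfl
  have hderiv : ∀ s : ℝ, HasDerivAt (fun τ : ℝ => ΨL (exp (τ • A)))
      (C.mulVec ((exp (s • A)).mulVec B)) s := by
    intro s
    have hd := hasDerivAt_exp_smul_const (𝕂 := ℝ) A s
    have hcomp := ΨL.hasFDerivAt.comp_hasDerivAt s hd
    have hkey : ΨL (exp (s • A) * A) = C.mulVec ((exp (s • A)).mulVec B) := by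
      rw [hΨapp]
      congr 2
      have hcommA : Commute A (exp (s • A)) :=
        ((Commute.refl A).smul_right s).exp_right
      rw [← hcommA.eq, ← mul_assoc, Matrix.nonsing_inv_mul A hdet, one_mul]
    exact hcomp.congr_deriv hkey
  have hFTC : ∀ T : ℝ, (∫ s in (0:ℝ)..T, C.mulVec ((exp (s • A)).mulVec B))
      = ΨL (exp (T • A)) - ΨL (exp ((0:ℝ) • A)) := by
    intro T
    exact (intervalIntegral.integral_eq_sub_of_hasDerivAt (fun s _ => hderiv s)
      (hg.intervalIntegrable 0 T)).symm ▸ rfl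
  have h1 : Tendsto (fun T : ℝ => ΨL (exp (T • A))) atTop (𝓝 (ΨL 0)) :=
    (ΨL.continuous.tendsto 0).comp hmexp
  have h2 : Tendsto (fun T : ℝ => ΨL (exp (T • A)) - ΨL (exp ((0:ℝ) • A))) atTop
      (𝓝 (ΨL 0 - ΨL (exp ((0:ℝ) • A)))) := h1.sub_const _
  have h3 : ΨL 0 - ΨL (exp ((0:ℝ) • A)) = -(C.mulVec (A⁻¹.mulVec B)) := by
    rw [zero_smul, exp_zero, hΨapp, hΨapp, mul_zero, mul_one]
    simp [Matrix.zero_mulVec, Matrix.mulVec_zero]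
  rw [← h3]
  refine Tendsto.congr (fun T => (hFTC T).symm) h2

lemma gv_cont {n p : ℕ} (A : Matrix (Fin n) (Fin n) ℝ) (B : Fin n → ℝ)
    (C : Matrix (Fin p) (Fin n) ℝ) :
    Continuous fun s : ℝ => C.mulVec ((exp (s • A)).mulVec B) := by
  letI : NormedRing (Matrix (Fin n) (Fin n) ℝ) := Matrix.linftyOpNormedRing
  letI : NormedAlgebra ℝ (Matrix (Fin n) (Fin n) ℝ) := Matrix.linftyOpNormedAlgebra
  letI : CompleteSpace (Matrix (Fin n) (Fin n) ℝ) := FiniteDimensional.complete ℝ _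
  letI : NormedAlgebra ℚ (Matrix (Fin n) (Fin n) ℝ) := NormedAlgebra.restrictScalars ℚ ℝ _
  exact continuous_const.matrix_mulVec
    ((exp_continuous.comp (continuous_id.smul continuous_const)).matrix_mulVec continuous_const)

theorem statement_13 {n p : ℕ}
    (A : Matrix (Fin n) (Fin n) ℝ) (B : Fin n → ℝ) (C : Matrix (Fin p) (Fin n) ℝ)
    (hA : Hurwitz A)
    (hsign : ∀ t ≥ (0 : ℝ), ∀ s ≥ (0 : ℝ),
      0 ≤ dotProduct (C.mulVec ((mexp A t).mulVec B))
            (C.mulVec ((mexp A s).mulVec B)))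
    (y : (ℝ → ℝ) → ℝ → Fin p → ℝ)
    (hy : y = fun u t => ∫ s in (0 : ℝ)..t, u s • C.mulVec ((mexp A (t - s)).mulVec B))
    (γ γas : ℝ)
    (hγ : γ = sSup {r | ∃ t ≥ (0 : ℝ), ∃ u : ℝ → ℝ, Measurable u ∧
      (∀ᵐ s ∂(volume.restrict (Set.Ici (0 : ℝ))), |u s| ≤ 1) ∧ r = eNorm (y u t)})
    (hγas : γas = sSup {r | ∃ u : ℝ → ℝ, Measurable u ∧
      (∀ᵐ s ∂(volume.restrict (Set.Ici (0 : ℝ))), |u s| ≤ 1) ∧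
      r = limsup (fun t => eNorm (y u t)) atTop}) :
    γ = γas ∧
    γas = sSup {r | ∃ T > (0 : ℝ),
      r = eNorm (∫ s in (0 : ℝ)..T, C.mulVec ((mexp A s).mulVec B))} ∧
    sSup {r | ∃ T > (0 : ℝ),
      r = eNorm (∫ s in (0 : ℝ)..T, C.mulVec ((mexp A s).mulVec B))} =
      eNorm (C.mulVec (A⁻¹.mulVec B)) := by
  subst hy hγ hγas
  set g : ℝ → Fin p → ℝ := fun s => C.mulVec ((mexp A s).mulVec B) with hgdef
  have hgcont : Continuous g := gv_cont A B C
  have hsign' : ∀ t ≥ (0:ℝ), ∀ s ≥ (0:ℝ), 0 ≤ g t ⬝ᵥ g s := hsign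
  set L : ℝ := eNorm (C.mulVec (A⁻¹.mulVec B)) with hLdef
  have hLnonneg : 0 ≤ L := eNorm_nonneg _
  set F : ℝ → Fin p → ℝ := fun T => ∫ s in (0:ℝ)..T, g s with hFdef
  have hmexp := mexp_tendsto_zero A hA
  have hFlim : Tendsto F atTop (𝓝 (-(C.mulVec (A⁻¹.mulVec B)))) :=
    F_tendsto A B C hA hmexp
  have hFnormlim : Tendsto (fun T => eNorm (F T)) atTop (𝓝 L) := by
    have := (continuous_eNorm.tendsto _).comp hFlim
    simpa [hLdef, eNorm_neg, Function.comp_def] using this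
  have hFle : ∀ T : ℝ, 0 ≤ T → eNorm (F T) ≤ L := by
    intro T hT
    refine ge_of_tendsto hFnormlim ?_
    filter_upwards [eventually_ge_atTop T] with T' hT'
    exact eNorm_le (F_mono g hgcont hsign' hT hT')
  have hyF : ∀ t : ℝ, (∫ s in (0:ℝ)..t, (1:ℝ) • C.mulVec ((mexp A (t - s)).mulVec B)) = F t := by
    intro t
    have h := intervalIntegral.integral_comp_sub_left (a := (0:ℝ)) (b := t) (f := g) t
    rw [sub_self, sub_zero] at h
    calc (∫ s in (0:ℝ)..t, (1:ℝ) • C.mulVec ((mexp A (t - s)).mulVec B))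
        = ∫ s in (0:ℝ)..t, g (t - s) := by simp only [one_smul]; rfl
      _ = F t := h
  have hone_meas : Measurable (fun _ : ℝ => (1:ℝ)) := measurable_const
  have hone_bd : ∀ᵐ s ∂(volume.restrict (Set.Ici (0:ℝ))), |(fun _ : ℝ => (1:ℝ)) s| ≤ 1 :=
    Filter.Eventually.of_forall fun _ => by norm_num
  have hyle : ∀ (u : ℝ → ℝ), Measurable u →
      (∀ᵐ s ∂(volume.restrict (Set.Ici (0:ℝ))), |u s| ≤ 1) →
      ∀ t : ℝ, 0 ≤ t →
      eNorm (∫ s in (0:ℝ)..t, u s • C.mulVec ((mexp A (t - s)).mulVec B)) ≤ L := by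
    intro u hm hb t ht
    refine le_trans (eNorm_le (key_bound g hgcont hsign' u hm hb ht)) (hFle t ht)
  -- the three suprema
  set S1 := {r | ∃ t ≥ (0 : ℝ), ∃ u : ℝ → ℝ, Measurable u ∧
      (∀ᵐ s ∂(volume.restrict (Set.Ici (0 : ℝ))), |u s| ≤ 1) ∧
      r = eNorm ((fun u t => ∫ s in (0 : ℝ)..t, u s • C.mulVec ((mexp A (t - s)).mulVec B)) u t)}
    with hS1
  set S2 := {r | ∃ u : ℝ → ℝ, Measurable u ∧
      (∀ᵐ s ∂(volume.restrict (Set.Ici (0 : ℝ))), |u s| ≤ 1) ∧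
      r = limsup (fun t => eNorm ((fun u t => ∫ s in (0 : ℝ)..t,
        u s • C.mulVec ((mexp A (t - s)).mulVec B)) u t)) atTop} with hS2
  set S3 := {r | ∃ T > (0 : ℝ),
      r = eNorm (∫ s in (0 : ℝ)..T, C.mulVec ((mexp A s).mulVec B))} with hS3
  have hS3F : ∀ T : ℝ, eNorm (∫ s in (0 : ℝ)..T, C.mulVec ((mexp A s).mulVec B))
      = eNorm (F T) := fun T => rfl
  have hb1 : ∀ r ∈ S1, r ≤ L := by
    rintro r ⟨t, ht, u, hm, hb, rfl⟩
    exact hyle u hm hb t ht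
  have hb3 : ∀ r ∈ S3, r ≤ L := by
    rintro r ⟨T, hT, rfl⟩
    rw [hS3F T]
    exact hFle T hT.le
  have hbdd1 : BddAbove S1 := ⟨L, hb1⟩
  have hbdd3 : BddAbove S3 := ⟨L, hb3⟩
  have hb2 : ∀ r ∈ S2, r ≤ L := by
    rintro r ⟨u, hm, hb, rfl⟩
    have hev : ∀ᶠ t : ℝ in atTop,
        eNorm ((fun (u : ℝ → ℝ) (t : ℝ) => ∫ s in (0 : ℝ)..t,
          u s • C.mulVec ((mexp A (t - s)).mulVec B)) u t) ≤ L := by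
      filter_upwards [eventually_ge_atTop (0:ℝ)] with t ht
      exact hyle u hm hb t ht
    exact limsup_le_of_le (Filter.isCoboundedUnder_le_of_le atTop (x := 0) fun t => eNorm_nonneg _) hev
  have hmem2 : L ∈ S2 := by
    refine ⟨fun _ => 1, hone_meas, hone_bd, ?_⟩
    have hfun : (fun t => eNorm ((fun (u : ℝ → ℝ) (t : ℝ) => ∫ s in (0 : ℝ)..t,
        u s • C.mulVec ((mexp A (t - s)).mulVec B)) (fun _ => (1:ℝ)) t))
        = fun t => eNorm (F t) := by
      funext t
      exact congrArg eNorm (hyF t)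
    rw [hfun]
    exact (hFnormlim.limsup_eq).symm
  have hsup3 : sSup S3 = L := by
    refine le_antisymm (Real.sSup_le hb3 hLnonneg) ?_
    refine le_of_tendsto hFnormlim ?_
    filter_upwards [eventually_gt_atTop (0:ℝ)] with T hT
    exact le_csSup hbdd3 ⟨T, hT, (hS3F T).symm⟩
  have hsup1 : sSup S1 = L := by
    refine le_antisymm (Real.sSup_le hb1 hLnonneg) ?_
    refine le_of_tendsto hFnormlim ?_
    filter_upwards [eventually_ge_atTop (0:ℝ)] with T hT
    exact le_csSup hbdd1 ⟨T, hT, fun _ => 1, hone_meas, hone_bd,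
      (congrArg eNorm (hyF T)).symm⟩
  have hsup2 : sSup S2 = L :=
    le_antisymm (Real.sSup_le hb2 hLnonneg) (le_csSup ⟨L, hb2⟩ hmem2)
  exact ⟨hsup1.trans hsup2.symm, hsup2.trans hsup3.symm, hsup3⟩
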